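/- Suppose L₀ is a sequential contraction of L. Then the maximal rank of the adjoint representation does not increase: for every x : L₀ there exists y : L with finrank ℝ (LinearMap.range (LieAlgebra.ad ℝ L₀ x)) ≤ finrank ℝ (LinearMap.range (LieAlgebra.ad ℝ L y)). Likewise the maximal rank of the coadjoint representation does not increase: for every linear functional f : L₀ →ₗ[ℝ] ℝ there exists a linear functional g : L →ₗ[ℝ] ℝ such that the rank of the bilinear form (x, y) ↦ f ⁅x, y⁆ on L₀ is at most the rank of the bilinear form (x, y) ↦ g ⁅x, y⁆ on L (rank of a bilinear form B meaning finrank of the range of the associated linear map x ↦ B(x, ·)). -/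

import Mathlib

open Filter Module

attribute [local instance] LieRing.ofAssociativeRing

/-- `L₀` is a sequential contraction of the real Lie algebra `L`: there is a sequence of
real-linear equivalences `T p : L ≃ₗ[ℝ] L₀` such that the transported brackets converge to the
bracket of `L₀`. -/
def IsSequentialContraction (L L₀ : Type*) [LieRing L] [LieAlgebra ℝ L]
    [LieRing L₀] [LieAlgebra ℝ L₀] [TopologicalSpace L₀] : Prop :=
  ∃ T : ℕ → (L ≃ₗ[ℝ] L₀), ∀ x y : L₀,
    Tendsto (fun p => T p ⁅(T p).symm x, (T p).symm y⁆) atTop (nhds ⁅x, y⁆)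

/-- The bilinear form `(x, y) ↦ f ⁅x, y⁆` associated with a linear functional `f`, viewed as a
linear map into the dual space. -/
noncomputable def coadForm {L : Type*} [LieRing L] [LieAlgebra ℝ L] (f : L →ₗ[ℝ] ℝ) :
    L →ₗ[ℝ] (L →ₗ[ℝ] ℝ) :=
  (LinearMap.llcomp ℝ L L ℝ f) ∘ₗ (LieAlgebra.ad ℝ L).toLinearMap

/-- Semicontinuity of rank: if a sequence of linear maps converges pointwise, then the rank of
the limit is eventually dominated. -/
lemma key_rank_le {M : Type*} [AddCommGroup M] [Module ℝ M] {n : ℕ}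
    (A : M →ₗ[ℝ] (Fin n → ℝ)) (B : ℕ → (M →ₗ[ℝ] (Fin n → ℝ)))
    (h : ∀ v, Tendsto (fun p => B p v) atTop (nhds (A v))) :
    ∃ p, finrank ℝ (LinearMap.range A) ≤ finrank ℝ (LinearMap.range (B p)) := by
  classical
  set r := finrank ℝ (LinearMap.range A) with hr
  let w := finBasis ℝ (LinearMap.range A)
  choose v hv using fun i : Fin r => LinearMap.mem_range.mp (w i).2
  have hAv : (fun i => A (v i)) = fun i => ((w i : LinearMap.range A) : Fin n → ℝ) := by
    funext i; exact hv i
  have hindep : LinearIndependent ℝ fun i => A (v i) := by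
    rw [hAv]
    exact w.linearIndependent.map' (LinearMap.range A).subtype
      (Submodule.ker_subtype _)
  have htend : Tendsto (fun p => fun i => B p (v i)) atTop (nhds fun i => A (v i)) := by
    rw [tendsto_pi_nhds]; exact fun i => h (v i)
  obtain ⟨p, hp⟩ := (htend.eventually hindep.eventually).exists
  refine ⟨p, ?_⟩
  have h1 : finrank ℝ (Submodule.span ℝ (Set.range fun i => B p (v i))) = r := by
    rw [finrank_span_eq_card hp, Fintype.card_fin]
  have h2 : Submodule.span ℝ (Set.range fun i => B p (v i)) ≤ LinearMap.range (B p) := by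
    rw [Submodule.span_le]; rintro _ ⟨i, rfl⟩; exact LinearMap.mem_range_self _ _
  calc r = _ := h1.symm
    _ ≤ _ := Submodule.finrank_mono h2

lemma rank_equiv_comp {M N N' : Type*} [AddCommGroup M] [Module ℝ M]
    [AddCommGroup N] [Module ℝ N] [AddCommGroup N'] [Module ℝ N']
    (e : N ≃ₗ[ℝ] N') (f : M →ₗ[ℝ] N) :
    finrank ℝ (LinearMap.range (e.toLinearMap ∘ₗ f)) = finrank ℝ (LinearMap.range f) := by
  rw [LinearMap.range_comp, LinearEquiv.finrank_map_eq]

lemma range_comp_equiv {M M' N : Type*} [AddCommGroup M] [Module ℝ M]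
    [AddCommGroup M'] [Module ℝ M'] [AddCommGroup N] [Module ℝ N]
    (f : M →ₗ[ℝ] N) (e : M' ≃ₗ[ℝ] M) :
    LinearMap.range (f ∘ₗ e.toLinearMap) = LinearMap.range f :=
  LinearMap.range_comp_of_range_eq_top f e.range

/-- Under a sequential contraction, the maximal rank of the adjoint representation and the
maximal rank of the coadjoint representation do not increase. -/
theorem rank_ad_coad_le_of_contraction {L L₀ : Type*} [LieRing L] [LieAlgebra ℝ L] [LieRing L₀] [LieAlgebra ℝ L₀]
    [Module.Finite ℝ L] [Module.Finite ℝ L₀]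
    [TopologicalSpace L₀] [IsTopologicalAddGroup L₀] [ContinuousSMul ℝ L₀] [T2Space L₀]
    (h : IsSequentialContraction L L₀) :
    (∀ x : L₀, ∃ y : L,
      finrank ℝ (LinearMap.range (LieAlgebra.ad ℝ L₀ x)) ≤
        finrank ℝ (LinearMap.range (LieAlgebra.ad ℝ L y))) ∧
    (∀ f : L₀ →ₗ[ℝ] ℝ, ∃ g : L →ₗ[ℝ] ℝ,
      finrank ℝ (LinearMap.range (coadForm f)) ≤ finrank ℝ (LinearMap.range (coadForm g))) := by
  obtain ⟨T, hT⟩ := h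
  set n := finrank ℝ L₀ with hn
  let b : Basis (Fin n) ℝ L₀ := finBasis ℝ L₀
  let e : L₀ ≃ₗ[ℝ] (Fin n → ℝ) := b.equivFun
  have he : Continuous e := e.toLinearMap.continuous_of_finiteDimensional
  constructor
  · intro x
    set A : L₀ →ₗ[ℝ] (Fin n → ℝ) := e.toLinearMap ∘ₗ (LieAlgebra.ad ℝ L₀ x)
    set B : ℕ → (L₀ →ₗ[ℝ] (Fin n → ℝ)) :=
      fun p => e.toLinearMap ∘ₗ ((T p).conj (LieAlgebra.ad ℝ L ((T p).symm x)))
    have hB : ∀ p v, B p v = e (T p ⁅(T p).symm x, (T p).symm v⁆) := by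
      intro p v
      simp [B, LinearEquiv.conj_apply, LieAlgebra.ad_apply]
    have hconv : ∀ v, Tendsto (fun p => B p v) atTop (nhds (A v)) := by
      intro v
      have : A v = e ⁅x, v⁆ := by simp [A, LieAlgebra.ad_apply]
      rw [this]
      simp only [hB]
      exact (he.tendsto _).comp (hT x v)
    obtain ⟨p, hp⟩ := key_rank_le A B hconv
    refine ⟨(T p).symm x, ?_⟩
    have hA : finrank ℝ (LinearMap.range A) =
        finrank ℝ (LinearMap.range (LieAlgebra.ad ℝ L₀ x)) := rank_equiv_comp _ _
    have hBp : finrank ℝ (LinearMap.range (B p)) =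
        finrank ℝ (LinearMap.range (LieAlgebra.ad ℝ L ((T p).symm x))) := by
      rw [show B p = e.toLinearMap ∘ₗ ((T p).conj (LieAlgebra.ad ℝ L ((T p).symm x))) from rfl,
        rank_equiv_comp, LinearEquiv.conj_apply, LinearMap.comp_assoc ,
        ← LinearMap.comp_assoc]
      rw [range_comp_equiv (((T p).toLinearMap) ∘ₗ (LieAlgebra.ad ℝ L ((T p).symm x))) (T p).symm,
        rank_equiv_comp]
    rw [hA] at hp
    rw [hBp] at hp
    exact hp
  · intro f
    have hf : Continuous f := f.continuous_of_finiteDimensional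
    let ε : (L₀ →ₗ[ℝ] ℝ) ≃ₗ[ℝ] (Fin n → ℝ) := (b.constr ℝ).symm
    have hε : ∀ (ψ : L₀ →ₗ[ℝ] ℝ) (i : Fin n), ε ψ i = ψ (b i) := by
      intro ψ i
      conv_rhs => rw [← (b.constr ℝ).apply_symm_apply ψ]
      rw [b.constr_basis]
    set A : L₀ →ₗ[ℝ] (Fin n → ℝ) := ε.toLinearMap ∘ₗ coadForm f
    let g : ℕ → (L →ₗ[ℝ] ℝ) := fun p => f ∘ₗ (T p).toLinearMap
    let C : ℕ → (L₀ →ₗ[ℝ] (L₀ →ₗ[ℝ] ℝ)) := fun p =>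
      ((T p).symm.dualMap.toLinearMap ∘ₗ coadForm (g p)) ∘ₗ (T p).symm.toLinearMap
    set B : ℕ → (L₀ →ₗ[ℝ] (Fin n → ℝ)) := fun p => ε.toLinearMap ∘ₗ C p
    have hC : ∀ p v u, C p v u = f (T p ⁅(T p).symm v, (T p).symm u⁆) := by
      intro p v u
      simp [C, g, coadForm, LieAlgebra.ad_apply]
    have hconv : ∀ v, Tendsto (fun p => B p v) atTop (nhds (A v)) := by
      intro v
      rw [tendsto_pi_nhds]
      intro i
      have h1 : ∀ p, B p v i = f (T p ⁅(T p).symm v, (T p).symm (b i)⁆) := by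
        intro p
        show ε (C p v) i = _
        rw [hε, hC]
      have h2 : A v i = f ⁅v, b i⁆ := by
        show ε (coadForm f v) i = _
        rw [hε]
        simp [coadForm, LieAlgebra.ad_apply]
      simp only [h1, h2]
      exact (hf.tendsto _).comp (hT v (b i))
    obtain ⟨p, hp⟩ := key_rank_le A B hconv
    refine ⟨g p, ?_⟩
    have hA : finrank ℝ (LinearMap.range A) =
        finrank ℝ (LinearMap.range (coadForm f)) := rank_equiv_comp _ _
    have hBp : finrank ℝ (LinearMap.range (B p)) =
        finrank ℝ (LinearMap.range (coadForm (g p))) := by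
      rw [show B p = ε.toLinearMap ∘ₗ C p from rfl, rank_equiv_comp,
        show C p = ((T p).symm.dualMap.toLinearMap ∘ₗ coadForm (g p)) ∘ₗ (T p).symm.toLinearMap
          from rfl,
        range_comp_equiv, rank_equiv_comp]
    rw [hA] at hp
    rw [hBp] at hp
    exact hp
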